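/- Let n, d, k ≥ 1 be integers and denote by Bⁿ ⊆ ℝⁿ and B^d ⊆ ℝ^d the open unit balls. Let V₁, …, V_k : Bⁿ × B^d → ℂⁿ × ℂ^d be smooth (C^∞) maps such that for every point p ∈ Bⁿ × B^d the vectors V₁(p), …, V_k(p) are linearly independent over ℂ; write E_p := span_ℂ{V₁(p), …, V_k(p)} ⊆ ℂⁿ × ℂ^d. Let P : ℂⁿ × ℂ^d → ℂⁿ be the projection onto the first factor. Assume: (i) for every p, the restriction of P to E_p is injective; and (ii) for every z ∈ Bⁿ, the subspace F_z := P(E_{(z,w)}) ⊆ ℂⁿ does not depend on w ∈ B^d. Then for every smooth map W : Bⁿ → ℂⁿ satisfying W(z) ∈ F_z for all z ∈ Bⁿ, there exists a smooth map V : Bⁿ × B^d → ℂⁿ × ℂ^d such that V(z,w) ∈ E_{(z,w)} and P(V(z,w)) = W(z) for all (z,w) ∈ Bⁿ × B^d. -/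

import Mathlib

open Metric

private lemma contDiffOn_finprod' {X : Type*} [NormedAddCommGroup X] [NormedSpace ℝ X]
    {s : Set X} {ι : Type*} (t : Finset ι) (f : ι → X → ℂ)
    (h : ∀ i ∈ t, ContDiffOn ℝ (⊤ : ℕ∞) (f i) s) :
    ContDiffOn ℝ (⊤ : ℕ∞) (fun p => ∏ i ∈ t, f i p) s := by
  classical
  induction t using Finset.induction_on with
  | empty => simpa using contDiffOn_const
  | insert _ _ hx ih =>
    simp only [Finset.prod_insert hx]
    exact (h _ (Finset.mem_insert_self _ _)).mul
      (ih fun i hi => h i (Finset.mem_insert_of_mem hi))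

private lemma contDiffOn_det' {X : Type*} [NormedAddCommGroup X] [NormedSpace ℝ X]
    {s : Set X} {k : ℕ} (M : X → Matrix (Fin k) (Fin k) ℂ)
    (h : ∀ i j, ContDiffOn ℝ (⊤ : ℕ∞) (fun p => M p i j) s) :
    ContDiffOn ℝ (⊤ : ℕ∞) (fun p => (M p).det) s := by
  classical
  simp only [Matrix.det_apply]
  apply ContDiffOn.sum
  intro σ _
  have hσ : ∀ p : X, (Equiv.Perm.sign σ • ∏ i, M p (σ i) i)
      = ((Equiv.Perm.sign σ : ℤ) : ℂ) * ∏ i, M p (σ i) i := by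
    intro p
    simp [Units.smul_def, zsmul_eq_mul]
  simp only [hσ]
  exact contDiffOn_const.mul (contDiffOn_finprod' _ _ fun i _ => h _ _)

private lemma gram_det_ne_zero' {F : Type*} [NormedAddCommGroup F] [InnerProductSpace ℂ F]
    {k : ℕ} {v : Fin k → F} (hv : LinearIndependent ℂ v) :
    (Matrix.of fun i j => (inner ℂ (v i) (v j) : ℂ)).det ≠ 0 := by
  intro h0
  obtain ⟨c, hc, hmul⟩ := Matrix.exists_mulVec_eq_zero_iff.2 h0
  set u : F := ∑ j, c j • v j with hu
  have hinner : ∀ i, (inner ℂ (v i) u : ℂ) = 0 := by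
    intro i
    have := congr_fun hmul i
    simp only [Matrix.mulVec, dotProduct, Matrix.of_apply, Pi.zero_apply] at this
    rw [hu, inner_sum]
    simpa [inner_smul_right, mul_comm] using this
  have husq : (inner ℂ u u : ℂ) = 0 := by
    rw [hu, sum_inner]
    simp [inner_smul_left, ← hu, hinner]
  have hu0 : u = 0 := inner_self_eq_zero.mp husq
  have := Fintype.linearIndependent_iff.mp hv c (by simpa [hu] using hu0.symm ▸ hu.symm)
  exact hc (funext fun i => this i)

private lemma eq_zero_of_orthogonal' {F : Type*} [NormedAddCommGroup F] [InnerProductSpace ℂ F]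
    {k : ℕ} {v : Fin k → F} {x : F} (hx : x ∈ Submodule.span ℂ (Set.range v))
    (h : ∀ i, (inner ℂ (v i) x : ℂ) = 0) : x = 0 := by
  have key : ∀ y ∈ Submodule.span ℂ (Set.range v), (inner ℂ y x : ℂ) = 0 := by
    intro y hy
    induction hy using Submodule.span_induction with
    | mem y hy => obtain ⟨i, rfl⟩ := hy; exact h i
    | zero => simp
    | add a b _ _ ha hb => rw [inner_add_left, ha, hb, add_zero]
    | smul a y _ hy => rw [inner_smul_left, hy, mul_zero]
  exact inner_self_eq_zero.mp (key x hx)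

/-- Local coordinate form of the related-sections lemma: given smooth maps
`V₁, …, V_k : Bⁿ × B^d → ℂⁿ × ℂ^d` which are pointwise linearly independent over ℂ,
spanning subspaces `E_p` on which the projection `P` onto the first factor is injective
and such that `F_z := P(E_(z,w))` does not depend on `w`, every smooth map
`W : Bⁿ → ℂⁿ` with `W z ∈ F_z` lifts to a smooth map `V` with values in `E` and
`P ∘ V = W ∘ pr₁`. -/
theorem related_sections_local
    {n d k : ℕ} (hn : 1 ≤ n) (hd : 1 ≤ d) (hk : 1 ≤ k)
    (V : Fin k → (EuclideanSpace ℝ (Fin n) × EuclideanSpace ℝ (Fin d)) →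
      (EuclideanSpace ℂ (Fin n) × EuclideanSpace ℂ (Fin d)))
    (E : (EuclideanSpace ℝ (Fin n) × EuclideanSpace ℝ (Fin d)) →
      Submodule ℂ (EuclideanSpace ℂ (Fin n) × EuclideanSpace ℂ (Fin d)))
    (hE : ∀ p, E p = Submodule.span ℂ (Set.range fun i => V i p))
    (P : (EuclideanSpace ℂ (Fin n) × EuclideanSpace ℂ (Fin d)) →ₗ[ℂ] EuclideanSpace ℂ (Fin n))
    (hP : P = LinearMap.fst ℂ (EuclideanSpace ℂ (Fin n)) (EuclideanSpace ℂ (Fin d)))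
    (hsmooth : ∀ i, ContDiffOn ℝ (⊤ : ℕ∞) (V i)
      (ball (0 : EuclideanSpace ℝ (Fin n)) 1 ×ˢ ball (0 : EuclideanSpace ℝ (Fin d)) 1))
    (hindep : ∀ p ∈ ball (0 : EuclideanSpace ℝ (Fin n)) 1 ×ˢ ball (0 : EuclideanSpace ℝ (Fin d)) 1,
      LinearIndependent ℂ fun i => V i p)
    (hPinj : ∀ p ∈ ball (0 : EuclideanSpace ℝ (Fin n)) 1 ×ˢ ball (0 : EuclideanSpace ℝ (Fin d)) 1,
      Set.InjOn P (E p))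
    (hFconst : ∀ z ∈ ball (0 : EuclideanSpace ℝ (Fin n)) 1,
      ∀ w ∈ ball (0 : EuclideanSpace ℝ (Fin d)) 1, ∀ w' ∈ ball (0 : EuclideanSpace ℝ (Fin d)) 1,
        (E (z, w)).map P = (E (z, w')).map P)
    (W : EuclideanSpace ℝ (Fin n) → EuclideanSpace ℂ (Fin n))
    (hW : ContDiffOn ℝ (⊤ : ℕ∞) W (ball (0 : EuclideanSpace ℝ (Fin n)) 1))
    (hWF : ∀ z ∈ ball (0 : EuclideanSpace ℝ (Fin n)) 1,
      ∀ w ∈ ball (0 : EuclideanSpace ℝ (Fin d)) 1, W z ∈ (E (z, w)).map P) :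
    ∃ Vsec : (EuclideanSpace ℝ (Fin n) × EuclideanSpace ℝ (Fin d)) →
        (EuclideanSpace ℂ (Fin n) × EuclideanSpace ℂ (Fin d)),
      ContDiffOn ℝ (⊤ : ℕ∞) Vsec
        (ball (0 : EuclideanSpace ℝ (Fin n)) 1 ×ˢ ball (0 : EuclideanSpace ℝ (Fin d)) 1) ∧
      ∀ p ∈ ball (0 : EuclideanSpace ℝ (Fin n)) 1 ×ˢ ball (0 : EuclideanSpace ℝ (Fin d)) 1,
        Vsec p ∈ E p ∧ P (Vsec p) = W p.1 := by
  classical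
  set s : Set (EuclideanSpace ℝ (Fin n) × EuclideanSpace ℝ (Fin d)) :=
    ball (0 : EuclideanSpace ℝ (Fin n)) 1 ×ˢ ball (0 : EuclideanSpace ℝ (Fin d)) 1 with hs
  -- projected sections
  set v : Fin k → (EuclideanSpace ℝ (Fin n) × EuclideanSpace ℝ (Fin d)) →
      EuclideanSpace ℂ (Fin n) := fun i p => P (V i p) with hvdef
  -- Gram matrix, right-hand side, coefficients
  set G : (EuclideanSpace ℝ (Fin n) × EuclideanSpace ℝ (Fin d)) →
      Matrix (Fin k) (Fin k) ℂ :=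
    fun p => Matrix.of fun i j => (inner ℂ (v i p) (v j p) : ℂ) with hGdef
  set b : (EuclideanSpace ℝ (Fin n) × EuclideanSpace ℝ (Fin d)) → Fin k → ℂ :=
    fun p i => (inner ℂ (v i p) (W p.1) : ℂ) with hbdef
  set c : (EuclideanSpace ℝ (Fin n) × EuclideanSpace ℝ (Fin d)) → Fin k → ℂ :=
    fun p => ((G p).det)⁻¹ • ((G p).adjugate.mulVec (b p)) with hcdef
  -- linear independence of the projected sections on s
  have hvind : ∀ p ∈ s, LinearIndependent ℂ fun i => v i p := by
    intro p hp
    refine (hindep p hp).map (f := P) ?_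
    rw [Submodule.disjoint_def]
    intro x hx hker
    have hx' : x ∈ E p := by rw [hE]; exact hx
    have h0 : (0 : EuclideanSpace ℂ (Fin n) × EuclideanSpace ℂ (Fin d)) ∈ E p :=
      (E p).zero_mem
    exact hPinj p hp hx' h0 (by simpa using (LinearMap.mem_ker.mp hker))
  have hdet : ∀ p ∈ s, (G p).det ≠ 0 := fun p hp => gram_det_ne_zero' (hvind p hp)
  -- the Gram system is solved by c
  have hsolve : ∀ p ∈ s, (G p).mulVec (c p) = b p := by
    intro p hp
    rw [hcdef]
    simp only [Matrix.mulVec_smul, Matrix.mulVec_mulVec, Matrix.mul_adjugate,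
      Matrix.smul_mulVec, Matrix.one_mulVec]
    rw [smul_smul, inv_mul_cancel₀ (hdet p hp), one_smul]
  -- membership of W in the projected span
  have hWspan : ∀ p ∈ s, W p.1 ∈ Submodule.span ℂ (Set.range fun i => v i p) := by
    intro p hp
    have := hWF p.1 hp.1 p.2 hp.2
    rw [hE, Submodule.map_span] at this
    have himg : (⇑P '' Set.range fun i => V i (p.1, p.2))
        = Set.range fun i => v i p := by
      rw [← Set.range_comp]; rfl
    rwa [himg] at this
  -- the key pointwise identity
  have hkey : ∀ p ∈ s, ∑ i, c p i • v i p = W p.1 := by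
    intro p hp
    have horth : ∀ i, (inner ℂ (v i p) (W p.1 - ∑ j, c p j • v j p) : ℂ) = 0 := by
      intro i
      have hGi := congr_fun (hsolve p hp) i
      simp only [Matrix.mulVec, dotProduct, hGdef, Matrix.of_apply, hbdef] at hGi
      rw [inner_sub_right, inner_sum, sub_eq_zero]
      simp only [inner_smul_right]
      rw [← hGi]
      exact Finset.sum_congr rfl fun j _ => mul_comm _ _
    have hmem : W p.1 - ∑ j, c p j • v j p ∈
        Submodule.span ℂ (Set.range fun i => v i p) := by
      refine Submodule.sub_mem _ (hWspan p hp) ?_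
      exact Submodule.sum_mem _ fun j _ =>
        Submodule.smul_mem _ _ (Submodule.subset_span ⟨j, rfl⟩)
    have := eq_zero_of_orthogonal' hmem horth
    have h := sub_eq_zero.mp this
    exact h.symm
  -- smoothness of the projected sections
  have hvsmooth : ∀ i, ContDiffOn ℝ (⊤ : ℕ∞) (v i) s := by
    intro i
    have : v i = fun p => (V i p).1 := by
      funext p; rw [hvdef, hP]; rfl
    rw [this]
    exact (hsmooth i).fst
  -- smoothness of W ∘ pr₁ on s
  have hWfst : ContDiffOn ℝ (⊤ : ℕ∞) (fun p : EuclideanSpace ℝ (Fin n) ×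
      EuclideanSpace ℝ (Fin d) => W p.1) s :=
    hW.comp contDiffOn_fst fun p hp => hp.1
  -- smoothness of Gram entries and rhs
  have hGsmooth : ∀ i j, ContDiffOn ℝ (⊤ : ℕ∞) (fun p => G p i j) s := by
    intro i j
    exact ContDiffOn.inner (𝕜 := ℂ) (hvsmooth i) (hvsmooth j)
  have hbsmooth : ∀ i, ContDiffOn ℝ (⊤ : ℕ∞) (fun p => b p i) s := by
    intro i
    exact ContDiffOn.inner (𝕜 := ℂ) (hvsmooth i) hWfst
  have hdetsmooth : ContDiffOn ℝ (⊤ : ℕ∞) (fun p => (G p).det) s :=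
    contDiffOn_det' G hGsmooth
  have hadjsmooth : ∀ i j, ContDiffOn ℝ (⊤ : ℕ∞) (fun p => (G p).adjugate i j) s := by
    intro i j
    have : (fun p => (G p).adjugate i j)
        = fun p => ((G p).updateRow j (Pi.single i 1)).det := by
      funext p; rw [Matrix.adjugate_apply]
    rw [this]
    apply contDiffOn_det'
    intro a bb
    by_cases haj : a = j
    · subst haj
      simp only [Matrix.updateRow_self]
      exact contDiffOn_const
    · simp only [Matrix.updateRow_ne haj]
      exact hGsmooth a bb
  have hcsmooth : ∀ i, ContDiffOn ℝ (⊤ : ℕ∞) (fun p => c p i) s := by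
    intro i
    have : (fun p => c p i)
        = fun p => ((G p).det)⁻¹ * ∑ j, (G p).adjugate i j * b p j := by
      funext p
      rw [hcdef]
      simp [Matrix.mulVec, dotProduct, smul_eq_mul]
    rw [this]
    exact (hdetsmooth.inv hdet).mul
      (ContDiffOn.sum fun j _ => (hadjsmooth i j).mul (hbsmooth j))
  -- the section
  refine ⟨fun p => ∑ i, c p i • V i p, ?_, ?_⟩
  · apply ContDiffOn.sum
    intro i _
    have hlsmul : ContDiffOn ℝ (⊤ : ℕ∞) (fun p =>
        (ContinuousLinearMap.lsmul ℝ ℂ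
          (E := EuclideanSpace ℂ (Fin n) × EuclideanSpace ℂ (Fin d))) (c p i)) s :=
      (ContinuousLinearMap.lsmul ℝ ℂ
        (E := EuclideanSpace ℂ (Fin n) × EuclideanSpace ℂ (Fin d))).contDiff.comp_contDiffOn
        (hcsmooth i)
    have := hlsmul.clm_apply (hsmooth i)
    simpa using this
  · intro p hp
    constructor
    · rw [hE]
      exact Submodule.sum_mem _ fun i _ =>
        Submodule.smul_mem _ _ (Submodule.subset_span ⟨i, rfl⟩)
    · have : P (∑ i, c p i • V i p) = ∑ i, c p i • v i p := by
        rw [map_sum]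
        simp [hvdef, LinearMap.map_smul]
      rw [this, hkey p hp]
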